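/- Let 0 < p < 1/2, q = 1 − p, and for k ≥ 0 let A_k be the (k+1)×(k+1) traffic-light (ℓ = 1) matrix. Define R_k(z) = det(I − z A_k) for k ≥ 0, and define polynomials R̃_k by R̃_{−1}(z) = 1, R̃_0(z) = 1 − (1 − p²) z, and R̃_k(z) = (1 − 2 p q z) R̃_{k−1}(z) − p² q² z² R̃_{k−2}(z) for k ≥ 1. Then for all k ≥ 1, R_k(z) = R̃_k(z) + p q z · R̃_{k−1}(z). -/
import Mathlib


open Matrix

/-- The `(k+1) × (k+1)` traffic-light (`ℓ = 1`) matrix: nonzero entries are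
`A(0,0) = 1 - p²`, `A(i,i) = 2 p q` for `1 ≤ i ≤ k-1`, `A(k,k) = p q`,
`A(i,i-1) = p²` for `1 ≤ i ≤ k`, and `A(i,i+1) = q²` for `0 ≤ i ≤ k-1`,
where `q = 1 - p`. -/
noncomputable def tlA (p : ℝ) (k : ℕ) : Matrix (Fin (k + 1)) (Fin (k + 1)) ℝ :=
  fun i j =>
    if (i : ℕ) = 0 ∧ (j : ℕ) = 0 then 1 - p ^ 2
    else if (i : ℕ) = (j : ℕ) ∧ (i : ℕ) = k then p * (1 - p)
    else if (i : ℕ) = (j : ℕ) then 2 * p * (1 - p)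
    else if (j : ℕ) + 1 = (i : ℕ) then p ^ 2
    else if (i : ℕ) + 1 = (j : ℕ) then (1 - p) ^ 2
    else 0

/-- Index-shifted auxiliary polynomials: `Rtrec p z (k+1)` is the `R̃_k(z)` of the paper:
`R̃_{-1}(z) = 1`, `R̃_0(z) = 1 - (1-p²) z`, and
`R̃_k(z) = (1 - 2pqz) R̃_{k-1}(z) - p²q²z² R̃_{k-2}(z)` for `k ≥ 1`. -/
noncomputable def Rtrec (p z : ℝ) : ℕ → ℝ
  | 0 => 1
  | 1 => 1 - (1 - p ^ 2) * z
  | (k + 2) =>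
    (1 - 2 * p * (1 - p) * z) * Rtrec p z (k + 1)
      - p ^ 2 * (1 - p) ^ 2 * z ^ 2 * Rtrec p z k


lemma succAbove_eq_castSucc {n : ℕ} (j : Fin (n+1)) :
    (⟨n+1, by omega⟩ : Fin (n+3)).succAbove j.castSucc = j.castSucc.castSucc := by
  rw [Fin.succAbove_of_castSucc_lt]
  simp [Fin.lt_def, j.isLt]

lemma succAbove_last_val {n : ℕ} :
    (⟨n+1, by omega⟩ : Fin (n+3)).succAbove (Fin.last (n+1)) = Fin.last (n+2) := by
  rw [Fin.succAbove_of_le_castSucc]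
  · rfl
  · simp [Fin.le_def, Fin.last]

lemma det_last_two {n : ℕ} (M : Matrix (Fin (n+3)) (Fin (n+3)) ℝ)
    (hrow : ∀ j : Fin (n+3), (j:ℕ) ≤ n → M (Fin.last _) j = 0)
    (hcol : ∀ i : Fin (n+3), (i:ℕ) ≤ n → M i (Fin.last _) = 0) :
    M.det = M (Fin.last _) (Fin.last _) * (M.submatrix Fin.castSucc Fin.castSucc).det
      - M (Fin.last _) ⟨n+1, by omega⟩ * M ⟨n+1, by omega⟩ (Fin.last _) *
        (M.submatrix (fun i : Fin (n+1) => i.castSucc.castSucc)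
          (fun j : Fin (n+1) => j.castSucc.castSucc)).det := by
  have h1 := Matrix.det_succ_row M (Fin.last _)
  rw [Finset.sum_eq_add (Fin.last (n+2)) (⟨n+1, by omega⟩ : Fin (n+3))
    (by simp [Fin.ext_iff]) ?_ (by simp) (by simp)] at h1
  · -- compute the inner determinant of the second term
    set N : Matrix (Fin (n+2)) (Fin (n+2)) ℝ :=
      M.submatrix (Fin.last (n+2)).succAbove (⟨n+1, by omega⟩ : Fin (n+3)).succAbove with hN
    have h2 := Matrix.det_succ_column N (Fin.last _)
    rw [Finset.sum_eq_single_of_mem (Fin.last (n+1)) (by simp) ?_] at h2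
    · have hNval : N (Fin.last (n+1)) (Fin.last (n+1)) = M ⟨n+1, by omega⟩ (Fin.last _) := by
        rw [hN, Matrix.submatrix_apply, Fin.succAbove_last, succAbove_last_val]
        exact congrArg₂ M (Fin.ext rfl) rfl
      have hNsub : N.submatrix (Fin.last (n+1)).succAbove (Fin.last (n+1)).succAbove
          = M.submatrix (fun i : Fin (n+1) => i.castSucc.castSucc)
            (fun j : Fin (n+1) => j.castSucc.castSucc) := by
        rw [hN, Matrix.submatrix_submatrix]
        ext i j
        simp [Fin.succAbove_last, succAbove_eq_castSucc]
      rw [hNval, hNsub] at h2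
      have hsign2 : ((-1 : ℝ)) ^ ((Fin.last (n+1) : ℕ) + (Fin.last (n+1) : ℕ)) = 1 := by
        simp [Fin.last]
      rw [hsign2, one_mul] at h2
      -- now assemble
      rw [h1, Fin.succAbove_last, h2]
      have hs1 : ((-1:ℝ)) ^ ((Fin.last (n+2) : ℕ) + (Fin.last (n+2) : ℕ)) = 1 := by
        simp [Fin.last]
      have hs2 : ((-1:ℝ)) ^ ((Fin.last (n+2) : ℕ) + ((⟨n+1, by omega⟩ : Fin (n+3)) : ℕ)) = -1 := by
        simp [Fin.last]
        exact Odd.neg_one_pow ⟨n+1, by ring⟩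
      rw [hs1, hs2]
      ring
    · intro i _ hi
      have : N i (Fin.last (n+1)) = 0 := by
        rw [hN, Matrix.submatrix_apply, Fin.succAbove_last, succAbove_last_val]
        exact hcol _ (by have := i.isLt; have h := Fin.val_lt_last hi; simp at h ⊢; omega)
      rw [this, mul_zero, zero_mul]
  · intro c _ hc
    have hc' : (c : ℕ) ≤ n := by
      have := c.isLt
      rcases hc with ⟨h1', h2'⟩
      simp [Fin.ext_iff, Fin.last] at h1' h2'
      omega
    rw [hrow c hc', mul_zero, zero_mul]

/-- The untruncated tridiagonal comparison matrix: like `tlA` but with `2pq` in the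
last diagonal entry. -/
noncomputable def tlB (p : ℝ) (k : ℕ) : Matrix (Fin (k + 1)) (Fin (k + 1)) ℝ :=
  fun i j =>
    if (i : ℕ) = 0 ∧ (j : ℕ) = 0 then 1 - p ^ 2
    else if (i : ℕ) = (j : ℕ) then 2 * p * (1 - p)
    else if (j : ℕ) + 1 = (i : ℕ) then p ^ 2
    else if (i : ℕ) + 1 = (j : ℕ) then (1 - p) ^ 2
    else 0

lemma entry_apply {m : ℕ} (z : ℝ) (A : Matrix (Fin m) (Fin m) ℝ) (i j : Fin m) :
    ((1 : Matrix (Fin m) (Fin m) ℝ) - z • A) i j = (if i = j then 1 else 0) - z * A i j := by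
  simp [Matrix.sub_apply, Matrix.one_apply]

lemma subB1 (p z : ℝ) (n : ℕ) :
    ((1 : Matrix (Fin (n+3)) (Fin (n+3)) ℝ) - z • tlB p (n+2)).submatrix
        Fin.castSucc Fin.castSucc
      = (1 : Matrix (Fin (n+2)) (Fin (n+2)) ℝ) - z • tlB p (n+1) := by
  ext i j
  simp only [Matrix.submatrix_apply, entry_apply, tlB, Fin.ext_iff, Fin.coe_castSucc]

lemma subB2 (p z : ℝ) (n : ℕ) :
    ((1 : Matrix (Fin (n+3)) (Fin (n+3)) ℝ) - z • tlB p (n+2)).submatrix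
        (fun i : Fin (n+1) => i.castSucc.castSucc) (fun j : Fin (n+1) => j.castSucc.castSucc)
      = (1 : Matrix (Fin (n+1)) (Fin (n+1)) ℝ) - z • tlB p n := by
  ext i j
  simp only [Matrix.submatrix_apply, entry_apply, tlB, Fin.ext_iff, Fin.coe_castSucc]

lemma subA1 (p z : ℝ) (n : ℕ) :
    ((1 : Matrix (Fin (n+3)) (Fin (n+3)) ℝ) - z • tlA p (n+2)).submatrix
        Fin.castSucc Fin.castSucc
      = (1 : Matrix (Fin (n+2)) (Fin (n+2)) ℝ) - z • tlB p (n+1) := by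
  ext i j
  simp only [Matrix.submatrix_apply, entry_apply, tlA, tlB, Fin.ext_iff, Fin.coe_castSucc]
  have hi := i.isLt
  split_ifs <;> first | rfl | omega

lemma subA2 (p z : ℝ) (n : ℕ) :
    ((1 : Matrix (Fin (n+3)) (Fin (n+3)) ℝ) - z • tlA p (n+2)).submatrix
        (fun i : Fin (n+1) => i.castSucc.castSucc) (fun j : Fin (n+1) => j.castSucc.castSucc)
      = (1 : Matrix (Fin (n+1)) (Fin (n+1)) ℝ) - z • tlB p n := by
  ext i j
  simp only [Matrix.submatrix_apply, entry_apply, tlA, tlB, Fin.ext_iff, Fin.coe_castSucc]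
  have hi := i.isLt
  split_ifs <;> first | rfl | omega

lemma rowA (p z : ℝ) (n : ℕ) : ∀ j : Fin (n+3), (j:ℕ) ≤ n →
    ((1 : Matrix (Fin (n+3)) (Fin (n+3)) ℝ) - z • tlA p (n+2)) (Fin.last _) j = 0 := by
  intro j hj
  simp only [entry_apply, tlA, Fin.ext_iff, Fin.val_last]
  split_ifs <;> first | omega | simp_all | norm_num

lemma colA (p z : ℝ) (n : ℕ) : ∀ i : Fin (n+3), (i:ℕ) ≤ n →
    ((1 : Matrix (Fin (n+3)) (Fin (n+3)) ℝ) - z • tlA p (n+2)) i (Fin.last _) = 0 := by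
  intro i hi
  simp only [entry_apply, tlA, Fin.ext_iff, Fin.val_last]
  split_ifs <;> first | omega | simp_all | norm_num

lemma rowB (p z : ℝ) (n : ℕ) : ∀ j : Fin (n+3), (j:ℕ) ≤ n →
    ((1 : Matrix (Fin (n+3)) (Fin (n+3)) ℝ) - z • tlB p (n+2)) (Fin.last _) j = 0 := by
  intro j hj
  simp only [entry_apply, tlB, Fin.ext_iff, Fin.val_last]
  split_ifs <;> first | omega | simp_all | norm_num

lemma colB (p z : ℝ) (n : ℕ) : ∀ i : Fin (n+3), (i:ℕ) ≤ n →
    ((1 : Matrix (Fin (n+3)) (Fin (n+3)) ℝ) - z • tlB p (n+2)) i (Fin.last _) = 0 := by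
  intro i hi
  simp only [entry_apply, tlB, Fin.ext_iff, Fin.val_last]
  split_ifs <;> first | omega | simp_all | norm_num

/-- `det (1 - z tlB p n) = Rtrec p z (n+1)`. -/
lemma detB (p z : ℝ) : ∀ n : ℕ,
    ((1 : Matrix (Fin (n+1)) (Fin (n+1)) ℝ) - z • tlB p n).det = Rtrec p z (n + 1) := by
  intro n
  induction n using Nat.strong_induction_on with
  | _ n ih =>
    match n with
    | 0 =>
      rw [Matrix.det_fin_one]
      simp [entry_apply, tlB, Rtrec]
      ring
    | 1 =>
      rw [Matrix.det_fin_two]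
      simp only [entry_apply, tlB, Rtrec]
      norm_num [Fin.ext_iff]
      ring
    | (n+2) =>
      rw [det_last_two _ (rowB p z n) (colB p z n), subB1, subB2,
        ih (n+1) (by omega), ih n (by omega)]
      have e1 : ((1 : Matrix (Fin (n+3)) (Fin (n+3)) ℝ) - z • tlB p (n+2))
          (Fin.last _) (Fin.last _) = 1 - z * (2 * p * (1 - p)) := by
        simp only [entry_apply, tlB, Fin.val_last]
        norm_num
      have e2 : ((1 : Matrix (Fin (n+3)) (Fin (n+3)) ℝ) - z • tlB p (n+2))
          (Fin.last _) ⟨n+1, by omega⟩ = -(z * p ^ 2) := by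
        simp only [entry_apply, tlB, Fin.ext_iff, Fin.val_last]
        norm_num
      have e3 : ((1 : Matrix (Fin (n+3)) (Fin (n+3)) ℝ) - z • tlB p (n+2))
          ⟨n+1, by omega⟩ (Fin.last _) = -(z * (1 - p) ^ 2) := by
        simp only [entry_apply, tlB, Fin.ext_iff, Fin.val_last]
        norm_num
      rw [e1, e2, e3,
        show Rtrec p z (n+1+1) = Rtrec p z (n+2) from rfl,
        show Rtrec p z (n+2+1) = (1 - 2*p*(1-p)*z) * Rtrec p z (n+2)
          - p^2*(1-p)^2*z^2 * Rtrec p z (n+1) from rfl]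
      ring

/-- For all `k ≥ 1`: `det (I - z A_k) = R̃_k(z) + p q z R̃_{k-1}(z)`
(indices shifted by one: `Rtrec p z (k+1) = R̃_k(z)`). -/
theorem tl_R_decomposition (p q : ℝ) (hp0 : 0 < p) (hp : p < 1 / 2) (hq : q = 1 - p)
    (z : ℝ) :
    ∀ k : ℕ, 1 ≤ k →
      (1 - z • tlA p k).det = Rtrec p z (k + 1) + p * q * z * Rtrec p z k := by
  subst hq
  intro k hk
  match k, hk with
  | 1, _ =>
    rw [Matrix.det_fin_two]
    simp only [entry_apply, tlA, Fin.ext_iff]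
    norm_num [Rtrec]
    ring
  | (n+2), _ =>
    rw [det_last_two _ (rowA p z n) (colA p z n), subA1, subA2, detB, detB]
    have e1 : ((1 : Matrix (Fin (n+3)) (Fin (n+3)) ℝ) - z • tlA p (n+2))
        (Fin.last _) (Fin.last _) = 1 - z * (p * (1 - p)) := by
      simp only [entry_apply, tlA, Fin.val_last]
      norm_num
    have e2 : ((1 : Matrix (Fin (n+3)) (Fin (n+3)) ℝ) - z • tlA p (n+2))
        (Fin.last _) ⟨n+1, by omega⟩ = -(z * p ^ 2) := by
      simp only [entry_apply, tlA, Fin.ext_iff, Fin.val_last]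
      norm_num
    have e3 : ((1 : Matrix (Fin (n+3)) (Fin (n+3)) ℝ) - z • tlA p (n+2))
        ⟨n+1, by omega⟩ (Fin.last _) = -(z * (1 - p) ^ 2) := by
      simp only [entry_apply, tlA, Fin.ext_iff, Fin.val_last]
      norm_num
    rw [e1, e2, e3,
      show Rtrec p z (n+1+1) = Rtrec p z (n+2) from rfl,
      show Rtrec p z (n+2+1) = (1 - 2*p*(1-p)*z) * Rtrec p z (n+2)
        - p^2*(1-p)^2*z^2 * Rtrec p z (n+1) from rfl]
    ring
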